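/- For every N×N complex matrix T and every integer k ≥ 1, the rank-k numerical range Λ_k(T) is a compact subset of the complex plane. -/

import Mathlib

open Matrix Complex

/-- The rank-k numerical range of a square complex matrix `T`:
all `λ ∈ ℂ` such that `P T P = λ P` for some orthogonal projection `P` of rank `k`. -/
def rankKRange {n : Type*} [Fintype n] [DecidableEq n]
    (k : ℕ) (T : Matrix n n ℂ) : Set ℂ :=
  {lam : ℂ | ∃ P : Matrix n n ℂ,
    P.IsHermitian ∧ P * P = P ∧ P.rank = k ∧ P * T * P = lam • P}


lemma trace_eq_rank_of_idem {N : ℕ} (P : Matrix (Fin N) (Fin N) ℂ)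
    (h : P * P = P) : P.trace = (P.rank : ℂ) := by
  have hb : LinearMap.toMatrix (Pi.basisFun ℂ (Fin N)) (Pi.basisFun ℂ (Fin N)) P.mulVecLin = P := by
    rw [LinearMap.toMatrix_eq_toMatrix']
    exact LinearMap.toMatrix'_toLin' P
  have hproj : LinearMap.IsProj (LinearMap.range P.mulVecLin) P.mulVecLin := by
    constructor
    · intro x; exact ⟨x, rfl⟩
    · rintro x ⟨y, rfl⟩
      have : (P * P).mulVecLin y = P.mulVecLin y := by rw [h]
      rwa [Matrix.mulVecLin_mul, LinearMap.comp_apply] at this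
  calc P.trace = LinearMap.trace ℂ _ P.mulVecLin := by
        rw [LinearMap.trace_eq_matrix_trace ℂ (Pi.basisFun ℂ (Fin N)), hb]
    _ = (Module.finrank ℂ (LinearMap.range P.mulVecLin) : ℂ) := hproj.trace
    _ = (P.rank : ℂ) := rfl

lemma entry_le_one {N : ℕ} (P : Matrix (Fin N) (Fin N) ℂ)
    (hH : P.IsHermitian) (h : P * P = P) (i j : Fin N) : ‖P i j‖ ≤ 1 := by
  have hstar : ∀ a b : Fin N, star (P a b) = P b a := fun a b => congrFun (congrFun hH b) a
  have key : ∀ a : Fin N, P a a = ((∑ k, Complex.normSq (P a k) : ℝ) : ℂ) := by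
    intro a
    have h1 : (P * P) a a = P a a := by rw [h]
    rw [Matrix.mul_apply] at h1
    rw [← h1]
    push_cast
    refine Finset.sum_congr rfl fun k _ => ?_
    rw [← hstar a k]
    exact Complex.mul_conj (P a k)
  set r := ∑ k, Complex.normSq (P j k) with hr
  have hr0 : 0 ≤ r := Finset.sum_nonneg fun k _ => Complex.normSq_nonneg _
  have hjj : P j j = (r : ℂ) := key j
  have hterm : ∀ k, Complex.normSq (P j k) ≤ r := fun k =>
    Finset.single_le_sum (f := fun k => Complex.normSq (P j k))
      (fun k _ => Complex.normSq_nonneg _) (Finset.mem_univ k)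
  have hrsq : r ^ 2 ≤ r := by
    have := hterm j
    rw [hjj, Complex.normSq_ofReal] at this
    nlinarith
  have hr1 : r ≤ 1 := by nlinarith
  have : Complex.normSq (P j i) ≤ 1 := le_trans (hterm i) hr1
  have habs : ‖P j i‖ ^ 2 = Complex.normSq (P j i) := by
    exact Complex.sq_norm _
  have hnorm : ‖P j i‖ ≤ 1 := by nlinarith [norm_nonneg (P j i)]
  calc ‖P i j‖ = ‖star (P j i)‖ := by rw [hstar j i]
    _ = ‖P j i‖ := norm_star _
    _ ≤ 1 := hnorm

/-- Λ_k(T) is compact. -/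
theorem rankKRange_isCompact (N k : ℕ) (hk : 1 ≤ k) (T : Matrix (Fin N) (Fin N) ℂ) :
    IsCompact (rankKRange k T) := by
  have hkC : (k : ℂ) ≠ 0 := Nat.cast_ne_zero.mpr (Nat.one_le_iff_ne_zero.mp hk)
  set f : Matrix (Fin N) (Fin N) ℂ → ℂ := fun P => (P * T * P).trace / k with hf
  set S : Set (Matrix (Fin N) (Fin N) ℂ) :=
    {P | P.IsHermitian ∧ P * P = P ∧ P.trace = (k : ℂ) ∧ P * T * P = f P • P} with hS
  have himage : rankKRange k T = f '' S := by
    ext lam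
    constructor
    · rintro ⟨P, hH, hidem, hrank, heq⟩
      have htr : P.trace = (k : ℂ) := by rw [trace_eq_rank_of_idem P hidem, hrank]
      have hfP : f P = lam := by
        rw [hf]; simp only
        rw [heq, Matrix.trace_smul, htr, smul_eq_mul, mul_div_assoc, div_self hkC, mul_one]
      exact ⟨P, ⟨hH, hidem, htr, by rw [hfP]; exact heq⟩, hfP⟩
    · rintro ⟨P, ⟨hH, hidem, htr, heq⟩, rfl⟩
      have hrank : P.rank = k := by
        have h2 := trace_eq_rank_of_idem P hidem
        rw [htr] at h2
        exact_mod_cast h2.symm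
      exact ⟨P, hH, hidem, hrank, heq⟩
  rw [himage]
  have hmul : Continuous fun P : Matrix (Fin N) (Fin N) ℂ => P * T * P :=
    (continuous_id.matrix_mul continuous_const).matrix_mul continuous_id
  have hfcont : Continuous f := (hmul.matrix_trace).div_const _
  have hSc : IsCompact S := by
    have hK : IsCompact {P : Matrix (Fin N) (Fin N) ℂ | ∀ i j, ‖P i j‖ ≤ 1} := by
      have hKeq : {P : Matrix (Fin N) (Fin N) ℂ | ∀ i j, ‖P i j‖ ≤ 1} =
          Set.univ.pi (fun _ : Fin N => Set.univ.pi fun _ : Fin N =>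
            Metric.closedBall (0 : ℂ) 1) := by
        ext P
        constructor
        · intro h i _ j _
          simpa using h i j
        · intro h i j
          simpa using h i (Set.mem_univ i) j (Set.mem_univ j)
      rw [hKeq]
      exact isCompact_univ_pi fun i => isCompact_univ_pi fun j => isCompact_closedBall _ _
    apply hK.of_isClosed_subset
    · have h1 : IsClosed {P : Matrix (Fin N) (Fin N) ℂ | P.IsHermitian} :=
        isClosed_eq continuous_id.matrix_conjTranspose continuous_id
      have h2 : IsClosed {P : Matrix (Fin N) (Fin N) ℂ | P * P = P} :=
        isClosed_eq (continuous_id.matrix_mul continuous_id) continuous_id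
      have h3 : IsClosed {P : Matrix (Fin N) (Fin N) ℂ | P.trace = (k : ℂ)} :=
        isClosed_eq continuous_id.matrix_trace continuous_const
      have h4 : IsClosed {P : Matrix (Fin N) (Fin N) ℂ | P * T * P = f P • P} :=
        isClosed_eq hmul (hfcont.smul continuous_id)
      exact h1.inter (h2.inter (h3.inter h4))
    · rintro P ⟨hH, hidem, -, -⟩
      exact fun i j => entry_le_one P hH hidem i j
  exact hSc.image hfcont
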